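/- Let K be a field of characteristic different from 2 and let a, c, d ∈ K with a ≠ 0. If 4ad = 5c², then g^7_{a0cd} is isomorphic to g^7_{1000}. If 4ad ≠ 5c² and 4ad − 5c² is a square in K, then g^7_{a0cd} is isomorphic to g^7_{1001}. -/

import Mathlib

variable (K : Type*) [Field K]

@[simp]
lemma my_cons_val_five {α : Type*} {m : ℕ} (x : α) (u : Fin m.succ.succ.succ.succ.succ → α) :
    Matrix.vecCons x u 5 =
      Matrix.vecHead (Matrix.vecTail (Matrix.vecTail (Matrix.vecTail (Matrix.vecTail u)))) :=
  rfl

@[simp]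
lemma my_cons_val_six {α : Type*} {m : ℕ} (x : α)
    (u : Fin m.succ.succ.succ.succ.succ.succ → α) :
    Matrix.vecCons x u 6 =
      Matrix.vecHead (Matrix.vecTail (Matrix.vecTail (Matrix.vecTail
        (Matrix.vecTail (Matrix.vecTail u))))) :=
  rfl

/-- The bracket of the Lie algebra `g^7_{abcd}` on `K^7` (indices `0..6` correspond to
`e_1..e_7`): the only nonzero brackets among basis vectors are `⁅e_1, e_{i+1}⁆ = e_i` for
`2 ≤ i ≤ 6`, `⁅e_4, e_7⁆ = a e_2`, `⁅e_5, e_6⁆ = b e_2`, `⁅e_5, e_7⁆ = c e_2 + (a+b) e_3`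
and `⁅e_6, e_7⁆ = d e_2 + c e_3 + (a+b) e_4`. -/
def g7b (a b c d : K) (x y : Fin 7 → K) : Fin 7 → K :=
  ![0,
    x 0 * y 2 - x 2 * y 0 + a * (x 3 * y 6 - x 6 * y 3) + b * (x 4 * y 5 - x 5 * y 4)
      + c * (x 4 * y 6 - x 6 * y 4) + d * (x 5 * y 6 - x 6 * y 5),
    x 0 * y 3 - x 3 * y 0 + (a + b) * (x 4 * y 6 - x 6 * y 4) + c * (x 5 * y 6 - x 6 * y 5),
    x 0 * y 4 - x 4 * y 0 + (a + b) * (x 5 * y 6 - x 6 * y 5),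
    x 0 * y 5 - x 5 * y 0,
    x 0 * y 6 - x 6 * y 0,
    0]

/-- The Lie algebras `g^7_{abcd}` and `g^7_{ABCD}` are isomorphic: there is a bijective
linear map preserving the brackets. -/
def g7Iso (a b c d A B C D : K) : Prop :=
  ∃ f : (Fin 7 → K) ≃ₗ[K] (Fin 7 → K),
    ∀ x y, f (g7b K a b c d x y) = g7b K A B C D (f x) (f y)

lemma g7Iso_trans {a b c d a' b' c' d' A B C D : K}
    (h1 : g7Iso K a b c d a' b' c' d') (h2 : g7Iso K a' b' c' d' A B C D) :
    g7Iso K a b c d A B C D := by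
  obtain ⟨f, hf⟩ := h1
  obtain ⟨g, hg⟩ := h2
  exact ⟨f.trans g, fun x y => by simp [LinearEquiv.trans_apply, hf, hg]⟩

/-- forward map of the shift isomorphism -/
def shF (a c d t : K) (x : Fin 7 → K) : Fin 7 → K :=
  ![x 0,
    x 1 - 3*t*a * x 2 + (-(2*t*(c - 2*t*a^2)) + t^2*a^2) * x 3
      - t*(d - 5*t*a*c + 5*a^3*t^2) * x 4,
    x 2 - 2*t*a * x 3 - t*(c - 2*t*a^2) * x 4,
    x 3 - t*a * x 4,
    x 4, x 5, x 6 + t * x 0]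

/-- inverse map of the shift isomorphism -/
def shG (a c d t : K) (y : Fin 7 → K) : Fin 7 → K :=
  ![y 0,
    y 1 + 3*t*a * y 2 + (2*t*c + t^2*a^2) * y 3 + t*d * y 4,
    y 2 + 2*t*a * y 3 + t*c * y 4,
    y 3 + t*a * y 4,
    y 4, y 5, y 6 - t * y 0]

lemma shF_add (a c d t : K) (x y : Fin 7 → K) :
    shF K a c d t (x + y) = shF K a c d t x + shF K a c d t y := by
  funext i; fin_cases i <;> simp [shF] <;> ring

lemma shF_smul (a c d t : K) (m : K) (x : Fin 7 → K) :
    shF K a c d t (m • x) = m • shF K a c d t x := by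
  funext i; fin_cases i <;> simp [shF] <;> ring

lemma shF_left (a c d t : K) (x : Fin 7 → K) :
    shG K a c d t (shF K a c d t x) = x := by
  funext i; fin_cases i <;> simp [shF, shG] <;> ring

lemma shF_right (a c d t : K) (y : Fin 7 → K) :
    shF K a c d t (shG K a c d t y) = y := by
  funext i; fin_cases i <;> simp [shF, shG] <;> ring

lemma shF_br (a c d t : K) (x y : Fin 7 → K) :
    shF K a c d t (g7b K a 0 c d x y) =
      g7b K a 0 (c - 2*t*a^2) (d - 5*t*a*c + 5*a^3*t^2)
        (shF K a c d t x) (shF K a c d t y) := by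
  funext i; fin_cases i <;> simp [shF, g7b] <;> ring

lemma g7Iso_shift (a c d t : K) :
    g7Iso K a 0 c d a 0 (c - 2*t*a^2) (d - 5*t*a*c + 5*a^3*t^2) :=
  ⟨⟨⟨⟨shF K a c d t, shF_add K a c d t⟩, shF_smul K a c d t⟩,
    shG K a c d t, shF_left K a c d t, shF_right K a c d t⟩,
    shF_br K a c d t⟩

/-- forward map of the scaling isomorphism -/
def scF (α β : K) (x : Fin 7 → K) : Fin 7 → K :=
  ![α * x 0, α^5*β * x 1, α^4*β * x 2, α^3*β * x 3, α^2*β * x 4, α*β * x 5, β * x 6]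

lemma scF_add (α β : K) (x y : Fin 7 → K) :
    scF K α β (x + y) = scF K α β x + scF K α β y := by
  funext i; fin_cases i <;> simp [scF] <;> ring

lemma scF_smul (α β : K) (m : K) (x : Fin 7 → K) :
    scF K α β (m • x) = m • scF K α β x := by
  funext i; fin_cases i <;> simp [scF] <;> ring

lemma scF_left (α β : K) (hα : α ≠ 0) (hβ : β ≠ 0) (x : Fin 7 → K) :
    scF K α⁻¹ β⁻¹ (scF K α β x) = x := by
  funext i; fin_cases i <;> simp [scF] <;> field_simp <;> ring

lemma scF_right (α β : K) (hα : α ≠ 0) (hβ : β ≠ 0) (y : Fin 7 → K) :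
    scF K α β (scF K α⁻¹ β⁻¹ y) = y := by
  funext i; fin_cases i <;> simp [scF] <;> field_simp <;> ring

lemma scF_br (a d A D α β : K) (hA : A * β = a * α^2) (hD : D * β = d * α^4)
    (x y : Fin 7 → K) :
    scF K α β (g7b K a 0 0 d x y) = g7b K A 0 0 D (scF K α β x) (scF K α β y) := by
  funext i; fin_cases i <;> simp [scF, g7b]
  · linear_combination (-(α^3*β*(x 3 * y 6 - x 6 * y 3))) * hA
      + (-(α*β*(x 5 * y 6 - x 6 * y 5))) * hD
  · linear_combination (-(α^2*β*(x 4 * y 6 - x 6 * y 4))) * hA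
  · linear_combination (-(α*β*(x 5 * y 6 - x 6 * y 5))) * hA
  · ring
  · ring

lemma g7Iso_scale (a d A D α β : K) (hα : α ≠ 0) (hβ : β ≠ 0)
    (hA : A * β = a * α^2) (hD : D * β = d * α^4) :
    g7Iso K a 0 0 d A 0 0 D :=
  ⟨⟨⟨⟨scF K α β, scF_add K α β⟩, scF_smul K α β⟩,
    scF K α⁻¹ β⁻¹, scF_left K α β hα hβ, scF_right K α β hα hβ⟩,
    scF_br K a d A D α β hA hD⟩

/-- Over a field of characteristic different from 2, with `a ≠ 0`: if `4ad = 5c²` then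
`g^7_{a0cd} ≅ g^7_{1000}`; if `4ad ≠ 5c²` and `4ad - 5c²` is a square in `K`, then
`g^7_{a0cd} ≅ g^7_{1001}`. -/
theorem stmt15 (hchar : ringChar K ≠ 2) (a c d : K) (ha : a ≠ 0) :
    (4 * a * d = 5 * c ^ 2 → g7Iso K a 0 c d 1 0 0 0) ∧
    (4 * a * d ≠ 5 * c ^ 2 → IsSquare (4 * a * d - 5 * c ^ 2) →
      g7Iso K a 0 c d 1 0 0 1) := by
  have h2 : (2 : K) ≠ 0 := Ring.two_ne_zero hchar
  have ha2 : (2 : K) * a ^ 2 ≠ 0 := mul_ne_zero h2 (pow_ne_zero 2 ha)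
  have e1 : c - 2 * (c / (2 * a ^ 2)) * a ^ 2 = 0 := by field_simp; ring
  refine ⟨fun h => ?_, fun hne hsq => ?_⟩
  · have e2 : d - 5 * (c / (2 * a ^ 2)) * a * c + 5 * a ^ 3 * (c / (2 * a ^ 2)) ^ 2 = 0 := by
      field_simp
      linear_combination h
    have hsh := g7Iso_shift K a c d (c / (2 * a ^ 2))
    rw [e1, e2] at hsh
    exact g7Iso_trans K hsh
      (g7Iso_scale K a 0 1 0 1 a one_ne_zero ha (by ring) (by ring))
  · obtain ⟨w, hw⟩ := hsq
    have hwne : w ≠ 0 := by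
      intro h0
      rw [h0, mul_zero, sub_eq_zero] at hw
      exact hne hw
    have hsh := g7Iso_shift K a c d (c / (2 * a ^ 2))
    rw [e1] at hsh
    have h4 : (4 : K) ≠ 0 := by
      have := mul_ne_zero h2 h2
      norm_num at this ⊢
      exact this
    refine g7Iso_trans K hsh
      (g7Iso_scale K a _ 1 1 (2 * a / w) (4 * a ^ 3 / w ^ 2) ?_ ?_ ?_ ?_)
    · exact div_ne_zero (mul_ne_zero h2 ha) hwne
    · exact div_ne_zero (mul_ne_zero h4 (pow_ne_zero 3 ha)) (pow_ne_zero 2 hwne)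
    · field_simp
      ring
    · field_simp
      linear_combination (-4 : K) * hw
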